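/- The optimal value of the non-adaptive-policy LP (Problem for NAdapOpt(γ)) is at least (1/D) times the optimal value of the original LP relaxation: if x* is feasible for the original LP (with x*_{e,t} ≤ p_{v,t}·a_{u,t} and Σ_{e ∋ u} x*_{e,t} ≤ a_{u,t}), then ȳ_{e,t} := (1/D)·x*_{e,t}/p_{v,t} is feasible for the non-adaptive LP (satisfying Σ_{e ∋ u} ȳ_{e,t} ≤ a_{u,t}, ȳ_{e,t} ∈ [0,1], and the same γ-proportionality constraints), and its objective Σ_t Σ_e w_{e,t}·ȳ_{e,t}·p_{v,t} equals (1/D)·Σ_t Σ_e w_{e,t}·x*_{e,t}. -/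

import Mathlib

/-- Scaling an original-LP feasible solution x* by ȳ = (1/D)·x*/p yields a feasible
solution of the non-adaptive LP (bounds, donor constraints, γ-proportionality all
preserved) with objective exactly (1/D) times the original objective. -/
theorem stmt_12 (E U V T : Type) [Fintype E] [Fintype U] [Fintype V] [Fintype T]
    [DecidableEq U] [DecidableEq V]
    (donor : E → U) (recip : E → V)
    (x p w : E → T → ℝ) (a : U → T → ℝ)
    (ha01 : ∀ u t, a u t = 0 ∨ a u t = 1)
    (hp0 : ∀ e t, 0 < p e t) (hp1 : ∀ e t, p e t ≤ 1)
    (hx0 : ∀ e t, 0 ≤ x e t)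
    (hxp : ∀ e t, x e t ≤ p e t * a (donor e) t)
    (hsum : ∀ u t, ∑ e ∈ Finset.univ.filter (fun e => donor e = u), x e t ≤ a u t)
    (D : ℕ) (hD : 1 ≤ D)
    (hdeg : ∀ u, (Finset.univ.filter (fun e : E => donor e = u)).card ≤ D)
    (γ : ℝ) (m : V → ℝ) (hm : ∀ v, 0 < m v)
    (hprop : ∀ v v' : V, v ≠ v' →
      γ * ((1 / m v) * ∑ t, ∑ e ∈ Finset.univ.filter (fun e => recip e = v),
        x e t * w e t) ≤
      (1 / m v') * ∑ t, ∑ e ∈ Finset.univ.filter (fun e => recip e = v'),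
        x e t * w e t)
    (ybar : E → T → ℝ)
    (hybar : ∀ e t, ybar e t = (1 / (D : ℝ)) * (x e t / p e t)) :
    -- bounds
    (∀ e t, 0 ≤ ybar e t ∧ ybar e t ≤ 1) ∧
    -- donor constraints
    (∀ u t, ∑ e ∈ Finset.univ.filter (fun e => donor e = u), ybar e t ≤ a u t) ∧
    -- proportionality preserved
    (∀ v v' : V, v ≠ v' →
      γ * ((1 / m v) * ∑ t, ∑ e ∈ Finset.univ.filter (fun e => recip e = v),
        ybar e t * p e t * w e t) ≤
      (1 / m v') * ∑ t, ∑ e ∈ Finset.univ.filter (fun e => recip e = v'),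
        ybar e t * p e t * w e t) ∧
    -- objective scales by 1/D
    (∑ t : T, ∑ e : E, w e t * ybar e t * p e t) =
      (1 / (D : ℝ)) * ∑ t : T, ∑ e : E, w e t * x e t := by
  have hD0 : (0:ℝ) < (D:ℝ) := by exact_mod_cast Nat.lt_of_lt_of_le Nat.zero_lt_one hD
  have hkey : ∀ e t, ybar e t * p e t = (1 / (D:ℝ)) * x e t := by
    intro e t
    have hpne := (hp0 e t).ne'
    rw [hybar]
    field_simp
  have hxdp : ∀ e t, x e t / p e t ≤ a (donor e) t := by
    intro e t
    rw [div_le_iff₀ (hp0 e t)]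
    calc x e t ≤ p e t * a (donor e) t := hxp e t
      _ = a (donor e) t * p e t := by ring
  have ha0 : ∀ u t, 0 ≤ a u t := by
    intro u t; rcases ha01 u t with h | h <;> simp [h]
  have hy0 : ∀ e t, 0 ≤ ybar e t := by
    intro e t
    rw [hybar]
    exact mul_nonneg (by positivity) (div_nonneg (hx0 e t) (hp0 e t).le)
  refine ⟨fun e t => ⟨hy0 e t, ?_⟩, ?_, ?_, ?_⟩
  · rw [hybar]
    have h1 : x e t / p e t ≤ 1 := by
      rcases ha01 (donor e) t with h | h
      · have := hxdp e t; rw [h] at this; linarith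
      · have := hxdp e t; linarith
    have h2 : (1:ℝ)/(D:ℝ) ≤ 1 := by
      rw [div_le_one hD0]; exact_mod_cast hD
    have h3 : (0:ℝ) ≤ x e t / p e t := div_nonneg (hx0 e t) (hp0 e t).le
    calc 1/(D:ℝ) * (x e t / p e t) ≤ 1/(D:ℝ) * 1 := by
          apply mul_le_mul_of_nonneg_left h1; positivity
      _ ≤ 1 := by linarith
  · intro u t
    rcases ha01 u t with h | h
    · rw [h]
      have : ∀ e ∈ Finset.univ.filter (fun e => donor e = u), ybar e t = 0 := by
        intro e he
        simp only [Finset.mem_filter] at he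
        have hx : x e t ≤ 0 := by
          have := hxp e t; rw [he.2, h] at this; linarith [this]
        have : x e t = 0 := le_antisymm hx (hx0 e t)
        rw [hybar, this]; simp
      rw [Finset.sum_eq_zero this]
    · rw [h]
      calc ∑ e ∈ Finset.univ.filter (fun e => donor e = u), ybar e t
          ≤ ∑ e ∈ Finset.univ.filter (fun e => donor e = u), 1/(D:ℝ) := by
            apply Finset.sum_le_sum
            intro e he
            simp only [Finset.mem_filter] at he
            rw [hybar]
            have h1 : x e t / p e t ≤ 1 := by
              have := hxdp e t; rw [he.2, h] at this; linarith
            have h3 : (0:ℝ) ≤ x e t / p e t := div_nonneg (hx0 e t) (hp0 e t).le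
            calc 1/(D:ℝ) * (x e t / p e t) ≤ 1/(D:ℝ) * 1 := by
                  apply mul_le_mul_of_nonneg_left h1; positivity
              _ = 1/(D:ℝ) := by ring
        _ = (Finset.univ.filter (fun e => donor e = u)).card * (1/(D:ℝ)) := by
            rw [Finset.sum_const, nsmul_eq_mul]
        _ ≤ (D:ℝ) * (1/(D:ℝ)) := by
            apply mul_le_mul_of_nonneg_right _ (by positivity)
            exact_mod_cast hdeg u
        _ = 1 := by field_simp
  · intro v v' hvv
    have hrw : ∀ v₀ : V, (∑ t, ∑ e ∈ Finset.univ.filter (fun e => recip e = v₀),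
        ybar e t * p e t * w e t) = (1/(D:ℝ)) * ∑ t, ∑ e ∈ Finset.univ.filter
        (fun e => recip e = v₀), x e t * w e t := by
      intro v₀
      rw [Finset.mul_sum]
      congr 1; ext t
      rw [Finset.mul_sum]
      congr 1; ext e
      rw [hkey]; ring
    rw [hrw v, hrw v']
    have := hprop v v' hvv
    have hc : γ * ((1/m v) * ((1/(D:ℝ)) * ∑ t, ∑ e ∈ Finset.univ.filter
        (fun e => recip e = v), x e t * w e t)) = (1/(D:ℝ)) * (γ * ((1/m v) *
        ∑ t, ∑ e ∈ Finset.univ.filter (fun e => recip e = v), x e t * w e t)) := by ring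
    rw [hc]
    have hc' : (1/m v') * ((1/(D:ℝ)) * ∑ t, ∑ e ∈ Finset.univ.filter
        (fun e => recip e = v'), x e t * w e t) = (1/(D:ℝ)) * ((1/m v') *
        ∑ t, ∑ e ∈ Finset.univ.filter (fun e => recip e = v'), x e t * w e t) := by ring
    rw [hc']
    apply mul_le_mul_of_nonneg_left this
    positivity
  · rw [Finset.mul_sum]
    congr 1; ext t
    rw [Finset.mul_sum]
    congr 1; ext e
    rw [mul_assoc, hkey]
    ring
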